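/- arXiv:1810.03049 — 3 statements merged into one kernel-verified Lean document; each statement's English description precedes it below -/
import Mathlib

section
/- Let p(z) be a complex polynomial with only simple roots and no zeros in the open unit disk D. Then there is a continuous one-parameter family of polynomials p_t(z), t ∈ [0,1], with p_0 = p and p_1 the constant polynomial 1, such that for every t, p_t has no zeros in D and all roots of p_t are simple. -/
open Polynomial

lemma coeff_comp_C_mul_X (p : Polynomial ℂ) (s : ℂ) (k : ℕ) :
    (p.comp (C s * X)).coeff k = p.coeff k * s ^ k := by
  induction p using Polynomial.induction_on' with
  | add f g hf hg => simp [add_comp, hf, hg, add_mul]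
  | monomial n a =>
    simp only [monomial_comp, mul_pow, ← C_pow, ← mul_assoc, ← C_mul]
    rw [C_mul_X_pow_eq_monomial, coeff_monomial, coeff_monomial]
    split_ifs with h
    · subst h; ring
    · ring

lemma squarefree_comp_C_mul_X (p : Polynomial ℂ) (hs : Squarefree p) {s : ℂ}
    (hs0 : s ≠ 0) : Squarefree (p.comp (C s * X)) := by
  intro x hx
  have key : ∀ q : Polynomial ℂ, (q.comp (C s * X)).comp (C s⁻¹ * X) = q := by
    intro q
    rw [comp_assoc]
    simp [mul_comp, C_comp, X_comp, ← mul_assoc, ← C_mul, mul_inv_cancel₀ hs0]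
  have hdvd : (x.comp (C s⁻¹ * X)) * (x.comp (C s⁻¹ * X)) ∣ p := by
    obtain ⟨c, hc⟩ := hx
    refine ⟨c.comp (C s⁻¹ * X), ?_⟩
    have := congrArg (fun q => q.comp (C s⁻¹ * X)) hc
    simpa [mul_comp, key] using this
  have := hs _ hdvd
  have hx' : IsUnit ((x.comp (C s⁻¹ * X)).comp (C s * X)) := by
    obtain ⟨u, hu⟩ := this.exists_left_inv
    have h1 : (u : Polynomial ℂ).comp (C s * X) * (x.comp (C s⁻¹ * X)).comp (C s * X) = 1 := by
      have := congrArg (fun q => q.comp (C s * X)) hu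
      simpa [mul_comp, one_comp] using this
    exact IsUnit.of_mul_eq_one _ ((mul_comm _ _).trans h1)
  have kk : (x.comp (C s⁻¹ * X)).comp (C s * X) = x := by
    rw [comp_assoc]
    simp [mul_comp, C_comp, X_comp, ← mul_assoc, ← C_mul, inv_mul_cancel₀ hs0]
  rwa [kk] at hx'

/-- A complex polynomial with only simple roots and no zeros in the
open unit disk can be connected to the constant polynomial 1 through a continuous
family of polynomials, each with no zeros in the open unit disk and only simple roots. -/
theorem stmt0 (p : Polynomial ℂ) (hp : p ≠ 0)
    (hsimple : Squarefree p)
    (hdisk : ∀ z : ℂ, ‖z‖ < 1 → ¬ p.IsRoot z) :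
    ∃ P : ℝ → Polynomial ℂ,
      (∀ k : ℕ, ContinuousOn (fun t => (P t).coeff k) (Set.Icc 0 1)) ∧
      P 0 = p ∧ P 1 = 1 ∧
      ∀ t ∈ Set.Icc (0:ℝ) 1,
        P t ≠ 0 ∧ Squarefree (P t) ∧ ∀ z : ℂ, ‖z‖ < 1 → ¬ (P t).IsRoot z := by
  set a0 : ℂ := p.coeff 0 with ha0def
  have ha0 : a0 ≠ 0 := by
    intro h
    exact hdisk 0 (by simp) (by simpa [Polynomial.IsRoot, Polynomial.eval_zero,
      ← Polynomial.coeff_zero_eq_eval_zero] using h)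
  refine ⟨fun t => if t ≤ (1:ℝ)/2 then p.comp (C ((1:ℂ) - 2*t) * X)
      else C (Complex.exp (((2:ℂ) - 2*t) * Complex.log a0)), ?_, ?_, ?_, ?_⟩
  · intro k
    have h1 : Continuous fun t : ℝ => p.coeff k * ((1:ℂ) - 2*t) ^ k := by
      fun_prop
    have h2 : Continuous fun t : ℝ =>
        (C (Complex.exp (((2:ℂ) - 2*t) * Complex.log a0))).coeff k := by
      simp only [coeff_C]
      split_ifs with h
      · fun_prop
      · exact continuous_const
    have : Continuous fun t : ℝ => if t ≤ (1:ℝ)/2 then p.coeff k * ((1:ℂ) - 2*t) ^ k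
        else (C (Complex.exp (((2:ℂ) - 2*t) * Complex.log a0))).coeff k := by
      apply Continuous.if_le h1 h2 continuous_id continuous_const
      intro x hx
      subst hx
      have : ((1:ℂ) - 2 * ((1:ℝ)/2 : ℝ)) = 0 := by push_cast; ring
      rw [this]
      have h2 : ((2:ℂ) - 2 * ((1:ℝ)/2 : ℝ)) = 1 := by push_cast; ring
      rw [h2, one_mul, Complex.exp_log ha0, coeff_C]
      rcases Nat.eq_zero_or_pos k with hk | hk
      · simp [hk, ha0def]
      · simp [Nat.pos_iff_ne_zero.mp hk, zero_pow (Nat.pos_iff_ne_zero.mp hk)]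
    have heq : (fun t : ℝ => (if t ≤ (1:ℝ)/2 then p.comp (C ((1:ℂ) - 2*t) * X)
        else C (Complex.exp (((2:ℂ) - 2*t) * Complex.log a0))).coeff k)
        = fun t : ℝ => if t ≤ (1:ℝ)/2 then p.coeff k * ((1:ℂ) - 2*t) ^ k
        else (C (Complex.exp (((2:ℂ) - 2*t) * Complex.log a0))).coeff k := by
      funext t
      split_ifs with h
      · exact coeff_comp_C_mul_X p _ k
      · rfl
    rw [heq]
    exact this.continuousOn
  · have h0 : (0:ℝ) ≤ (1:ℝ)/2 := by norm_num
    simp only [h0, if_pos]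
    have : ((1:ℂ) - 2 * ((0:ℝ):ℂ)) = 1 := by push_cast; ring
    rw [this]
    simp
  · have h1 : ¬ ((1:ℝ) ≤ (1:ℝ)/2) := by norm_num
    simp only [h1, if_neg, if_false]
    have : ((2:ℂ) - 2 * ((1:ℝ):ℂ)) = 0 := by push_cast; ring
    rw [this, zero_mul, Complex.exp_zero, map_one]
  · intro t ht
    by_cases h : t ≤ (1:ℝ)/2
    · simp only [h, if_pos]
      set s : ℂ := (1:ℂ) - 2*t with hs
      have hsnorm : ‖s‖ ≤ 1 := by
        rw [hs]
        have : ((1:ℂ) - 2 * (t:ℝ)) = (((1 - 2*t : ℝ)):ℂ) := by push_cast; ring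
        rw [this, Complex.norm_real, Real.norm_eq_abs, abs_le]
        constructor <;> [linarith [ht.2, h]; linarith [ht.1]]
      have hnoroot : ∀ z : ℂ, ‖z‖ < 1 → ¬ (p.comp (C s * X)).IsRoot z := by
        intro z hz hroot
        have : p.IsRoot (s * z) := by
          simpa [Polynomial.IsRoot, eval_comp] using hroot
        exact hdisk (s * z) (by
          calc ‖s * z‖ = ‖s‖ * ‖z‖ := norm_mul s z
          _ ≤ 1 * ‖z‖ := by gcongr
          _ < 1 := by simpa using hz) this
      rcases eq_or_ne s 0 with hs0 | hs0
      · rw [hs0]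
        have hconst : p.comp (C (0:ℂ) * X) = C a0 := by
          ext k
          rw [coeff_comp_C_mul_X, coeff_C]
          rcases Nat.eq_zero_or_pos k with hk | hk
          · simp [hk, ha0def]
          · simp [Nat.pos_iff_ne_zero.mp hk, zero_pow (Nat.pos_iff_ne_zero.mp hk)]
        rw [hconst]
        refine ⟨by simpa using ha0, (isUnit_C.mpr ha0.isUnit).squarefree, ?_⟩
        intro z _ hroot
        exact ha0 (by simpa [Polynomial.IsRoot] using hroot)
      · refine ⟨?_, squarefree_comp_C_mul_X p hsimple hs0, hnoroot⟩
        intro hzero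
        have : p = (p.comp (C s * X)).comp (C s⁻¹ * X) := by
          rw [comp_assoc]
          simp [mul_comp, C_comp, X_comp, ← mul_assoc, ← C_mul, mul_inv_cancel₀ hs0]
        rw [hzero, zero_comp] at this
        exact hp this
    · simp only [h, if_neg, if_false]
      have he : Complex.exp (((2:ℂ) - 2*t) * Complex.log a0) ≠ 0 := Complex.exp_ne_zero _
      refine ⟨by simpa using he, (isUnit_C.mpr he.isUnit).squarefree, ?_⟩
      intro z _ hroot
      exact he (by simpa [Polynomial.IsRoot] using hroot)
end

section
/- Let V and V' be F₂-vector spaces each equipped with an endomorphism X satisfying X² = 0, and suppose V' is 2-dimensional with basis {1, X·1} where X(1) = X·1 and X(X·1) = 0. Equip V ⊗ V' with the two commuting endomorphisms X_p = X ⊗ id and X_q = id ⊗ X. Then the subspace {m ∈ V ⊗ V' : X_p(m) = X_q(m)} equals {(X v) ⊗ 1 + v ⊗ (X·1) : v ∈ V}. -/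
open TensorProduct

/-- The model V' = F₂[X]/(X²) as F₂ × F₂ with basis 1 = (1,0) and X·1 = (0,1);
the action of X sends (a,b) = a·1 + b·X to a·X, i.e. (a,b) ↦ (0,a). -/
noncomputable def Xstd : (ZMod 2 × ZMod 2) →ₗ[ZMod 2] (ZMod 2 × ZMod 2) :=
  LinearMap.prod 0 (LinearMap.fst (ZMod 2) (ZMod 2) (ZMod 2))

noncomputable def comp1 (V : Type*) [AddCommGroup V] [Module (ZMod 2) V] :
    V ⊗[ZMod 2] (ZMod 2 × ZMod 2) →ₗ[ZMod 2] V :=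
  (TensorProduct.rid (ZMod 2) V).toLinearMap ∘ₗ
    TensorProduct.map LinearMap.id (LinearMap.fst (ZMod 2) (ZMod 2) (ZMod 2))

noncomputable def comp2 (V : Type*) [AddCommGroup V] [Module (ZMod 2) V] :
    V ⊗[ZMod 2] (ZMod 2 × ZMod 2) →ₗ[ZMod 2] V :=
  (TensorProduct.rid (ZMod 2) V).toLinearMap ∘ₗ
    TensorProduct.map LinearMap.id (LinearMap.snd (ZMod 2) (ZMod 2) (ZMod 2))

@[simp] lemma comp1_tmul (V : Type*) [AddCommGroup V] [Module (ZMod 2) V]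
    (v : V) (p : ZMod 2 × ZMod 2) : comp1 V (v ⊗ₜ p) = p.1 • v := by
  simp [comp1]

@[simp] lemma comp2_tmul (V : Type*) [AddCommGroup V] [Module (ZMod 2) V]
    (v : V) (p : ZMod 2 × ZMod 2) : comp2 V (v ⊗ₜ p) = p.2 • v := by
  simp [comp2]

lemma decomp (V : Type*) [AddCommGroup V] [Module (ZMod 2) V]
    (m : V ⊗[ZMod 2] (ZMod 2 × ZMod 2)) :
    m = (comp1 V m) ⊗ₜ[ZMod 2] ((1:ZMod 2), (0:ZMod 2))
        + (comp2 V m) ⊗ₜ[ZMod 2] ((0:ZMod 2), (1:ZMod 2)) := by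
  induction m using TensorProduct.induction_on with
  | zero => simp
  | tmul v p =>
      obtain ⟨a, b⟩ := p
      simp only [comp1_tmul, comp2_tmul]
      rw [TensorProduct.smul_tmul, TensorProduct.smul_tmul, ← TensorProduct.tmul_add]
      congr 1
      simp [Prod.ext_iff]
  | add x y hx hy =>
      rw [map_add, map_add, add_tmul, add_tmul]
      conv_lhs => rw [hx, hy]
      abel

/-- For V an F₂-vector space with endomorphism X with X² = 0 and
V' = F₂[X]/(X²), the subspace {m ∈ V ⊗ V' : (X⊗id)m = (id⊗X)m} equals
{(Xv) ⊗ 1 + v ⊗ X : v ∈ V}. -/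
theorem stmt4 (V : Type*) [AddCommGroup V] [Module (ZMod 2) V]
    (X : V →ₗ[ZMod 2] V) (hX : X ∘ₗ X = 0) :
    {m : V ⊗[ZMod 2] (ZMod 2 × ZMod 2) |
        TensorProduct.map X LinearMap.id m = TensorProduct.map LinearMap.id Xstd m} =
      {m | ∃ v : V, m = (X v) ⊗ₜ[ZMod 2] ((1:ZMod 2), (0:ZMod 2))
          + v ⊗ₜ[ZMod 2] ((0:ZMod 2), (1:ZMod 2))} := by
  have hXX : ∀ v : V, X (X v) = 0 := fun v => congrFun (congrArg DFunLike.coe hX) v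
  have h1p : ∀ m, comp1 V (TensorProduct.map X LinearMap.id m) = X (comp1 V m) := by
    intro m
    induction m using TensorProduct.induction_on with
    | zero => simp
    | tmul v p => simp
    | add x y hx hy => simp [hx, hy]
  have h2p : ∀ m, comp2 V (TensorProduct.map X LinearMap.id m) = X (comp2 V m) := by
    intro m
    induction m using TensorProduct.induction_on with
    | zero => simp
    | tmul v p => simp
    | add x y hx hy => simp [hx, hy]
  have h1q : ∀ m, comp1 V (TensorProduct.map LinearMap.id Xstd m) = 0 := by
    intro m
    induction m using TensorProduct.induction_on with
    | zero => simp
    | tmul v p => simp [Xstd]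
    | add x y hx hy => simp [hx, hy]
  have h2q : ∀ m, comp2 V (TensorProduct.map LinearMap.id Xstd m) = comp1 V m := by
    intro m
    induction m using TensorProduct.induction_on with
    | zero => simp
    | tmul v p => simp [Xstd]
    | add x y hx hy => simp [hx, hy]
  ext m
  simp only [Set.mem_setOf_eq]
  constructor
  · intro h
    refine ⟨comp2 V m, ?_⟩
    have e1 : X (comp1 V m) = 0 := by rw [← h1p, h, h1q]
    have e2 : X (comp2 V m) = comp1 V m := by rw [← h2p, h, h2q]
    rw [e2]
    exact decomp V m
  · rintro ⟨v, rfl⟩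
    simp [Xstd, hXX, TensorProduct.tmul_add]
    exact TensorProduct.tmul_zero _ v
end

section
/- Let V be an F₂-vector space with an endomorphism X satisfying X² = 0, and let V' = F₂[X]/(X²) with its natural X-action. Then the map v ↦ (X v) ⊗ 1 + v ⊗ X from V to the subspace {m ∈ V ⊗_{F₂} V' : (X ⊗ id)(m) = (id ⊗ X)(m)} is an F₂-linear isomorphism. -/
open TensorProduct

section aux
variable (V : Type*) [AddCommGroup V] [Module (ZMod 2) V]

noncomputable def pi1 : V ⊗[ZMod 2] (ZMod 2 × ZMod 2) →ₗ[ZMod 2] V :=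
  (TensorProduct.rid (ZMod 2) V).toLinearMap ∘ₗ
    TensorProduct.map LinearMap.id (LinearMap.fst (ZMod 2) (ZMod 2) (ZMod 2))

noncomputable def pi2 : V ⊗[ZMod 2] (ZMod 2 × ZMod 2) →ₗ[ZMod 2] V :=
  (TensorProduct.rid (ZMod 2) V).toLinearMap ∘ₗ
    TensorProduct.map LinearMap.id (LinearMap.snd (ZMod 2) (ZMod 2) (ZMod 2))

variable {V}

@[simp] lemma pi1_tmul (x : V) (p : ZMod 2 × ZMod 2) : pi1 V (x ⊗ₜ p) = p.1 • x := by
  simp [pi1]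

@[simp] lemma pi2_tmul (x : V) (p : ZMod 2 × ZMod 2) : pi2 V (x ⊗ₜ p) = p.2 • x := by
  simp [pi2]

lemma decomp_s5 (m : V ⊗[ZMod 2] (ZMod 2 × ZMod 2)) :
    m = pi1 V m ⊗ₜ ((1:ZMod 2), (0:ZMod 2)) + pi2 V m ⊗ₜ ((0:ZMod 2), (1:ZMod 2)) := by
  have : (LinearMap.id : V ⊗[ZMod 2] (ZMod 2 × ZMod 2) →ₗ[ZMod 2] _) =
      ((TensorProduct.mk (ZMod 2) V (ZMod 2 × ZMod 2)).flip ((1:ZMod 2),(0:ZMod 2))) ∘ₗ pi1 V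
        + ((TensorProduct.mk (ZMod 2) V (ZMod 2 × ZMod 2)).flip ((0:ZMod 2),(1:ZMod 2))) ∘ₗ pi2 V := by
    apply TensorProduct.ext'
    intro x p
    obtain ⟨a, b⟩ := p
    simp only [LinearMap.id_coe, id_eq, LinearMap.add_apply, LinearMap.coe_comp,
      Function.comp_apply, pi1_tmul, pi2_tmul, LinearMap.flip_apply, TensorProduct.mk_apply]
    rw [TensorProduct.smul_tmul, TensorProduct.smul_tmul, ← TensorProduct.tmul_add]
    congr 1
    simp [Prod.ext_iff]
  conv_lhs => rw [← LinearMap.id_apply (R := ZMod 2) m, this]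
  simp

end aux

/-- The map v ↦ (Xv) ⊗ 1 + v ⊗ X is an F₂-linear isomorphism from V
onto the subspace {m ∈ V ⊗ V' : (X⊗id)m = (id⊗X)m}, where V' = F₂[X]/(X²). -/
theorem stmt5 (V : Type*) [AddCommGroup V] [Module (ZMod 2) V]
    (X : V →ₗ[ZMod 2] V) (hX : X ∘ₗ X = 0) :
    Function.Injective (fun v : V =>
        (X v) ⊗ₜ[ZMod 2] ((1:ZMod 2), (0:ZMod 2))
          + v ⊗ₜ[ZMod 2] ((0:ZMod 2), (1:ZMod 2))) ∧
    Set.range (fun v : V =>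
        (X v) ⊗ₜ[ZMod 2] ((1:ZMod 2), (0:ZMod 2))
          + v ⊗ₜ[ZMod 2] ((0:ZMod 2), (1:ZMod 2))) =
      {m : V ⊗[ZMod 2] (ZMod 2 × ZMod 2) |
        TensorProduct.map X LinearMap.id m = TensorProduct.map LinearMap.id Xstd m} := by
  have hXX : ∀ v, X (X v) = 0 := fun v => congrFun (congrArg DFunLike.coe hX) v
  -- commutation lemmas
  have h1 : pi1 V ∘ₗ TensorProduct.map X LinearMap.id = X ∘ₗ pi1 V := by
    apply TensorProduct.ext'; intro x p; simp
  have h2 : pi2 V ∘ₗ TensorProduct.map X LinearMap.id = X ∘ₗ pi2 V := by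
    apply TensorProduct.ext'; intro x p; simp
  have h3 : pi1 V ∘ₗ TensorProduct.map LinearMap.id Xstd = 0 := by
    apply TensorProduct.ext'; intro x p; simp [Xstd]
  have h4 : pi2 V ∘ₗ TensorProduct.map LinearMap.id Xstd = pi1 V := by
    apply TensorProduct.ext'; intro x p; simp [Xstd]
  constructor
  · intro v w h
    have := congrArg (pi2 V) h
    simpa using this
  · ext m
    simp only [Set.mem_range, Set.mem_setOf_eq]
    constructor
    · rintro ⟨v, rfl⟩
      simp [hXX, Xstd, Prod.mk_zero_zero]
    · intro hm
      refine ⟨pi2 V m, ?_⟩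
      have e1 : X (pi1 V m) = 0 := by
        have := congrArg (pi1 V) hm
        rw [← LinearMap.comp_apply, ← LinearMap.comp_apply, h1, h3] at this
        simpa using this
      have e2 : X (pi2 V m) = pi1 V m := by
        have := congrArg (pi2 V) hm
        rw [← LinearMap.comp_apply, ← LinearMap.comp_apply, h2, h4] at this
        simpa using this
      simp only [e2]
      exact (decomp_s5 m).symm
end
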